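/- Let $\gamma' \geq 0$ be a real number and let $(\lambda_i)_{i \ge 0}$ be any sequence of real numbers. Then there exists a unique doubly-indexed family of real numbers $(C_{ij})_{i \ge 0,\, 0 \le j \le i}$ such that for every $i \ge 0$, $\sum_{j=0}^{i} C_{ij} = -\dfrac{\lambda_i}{2(2i+1)}$, and for every $i \ge 1$ and $0 \le j \le i-1$, $(j+1)(j+1-\gamma')\,C_{i(j+1)} - (i-j)(i-j+\gamma')\,C_{ij} = \sum_{k=j}^{i-1} C_{kj}\,\lambda_{i-1-k}$. -/

import Mathlib

open Finset

private lemma vandermonde (b : ℝ) : ∀ (n : ℕ) (c : ℝ),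
    ∑ d ∈ range (n+1), (-1:ℝ)^d * (n.choose d : ℝ) *
      ((∏ m ∈ range d, (b + m)) * (∏ m ∈ Ico d n, (c + m))) =
    ∏ m ∈ range n, (c - b + m)
  | 0, c => by simp
  | n+1, c => by
    have H := fun d : ℕ => (-1:ℝ)^d * (n.choose d : ℝ) *
      ((∏ m ∈ range d, (b + m)) * (∏ m ∈ Ico d (n+1), (c + m)))
    rw [Finset.sum_range_succ']
    have hsplit : ∀ d ∈ range (n+1),
        (-1:ℝ)^(d+1) * ((n+1).choose (d+1) : ℝ) *
          ((∏ m ∈ range (d+1), (b + m)) * (∏ m ∈ Ico (d+1) (n+1), (c + m)))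
        = ((-1:ℝ)^(d+1) * (n.choose (d+1) : ℝ) *
            ((∏ m ∈ range (d+1), (b + m)) * (∏ m ∈ Ico (d+1) (n+1), (c + m))))
          + ((-1:ℝ)^(d+1) * (n.choose d : ℝ) *
            ((∏ m ∈ range (d+1), (b + m)) * (∏ m ∈ Ico (d+1) (n+1), (c + m)))) := by
      intro d _
      rw [Nat.choose_succ_succ]
      push_cast
      ring
    rw [Finset.sum_congr rfl hsplit, Finset.sum_add_distrib]
    -- first piece + F 0 = ∑ H over range (n+1)
    have h1 : (∑ d ∈ range (n+1), (-1:ℝ)^(d+1) * (n.choose (d+1) : ℝ) *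
            ((∏ m ∈ range (d+1), (b + m)) * (∏ m ∈ Ico (d+1) (n+1), (c + m))))
        + (-1:ℝ)^0 * ((n+1).choose 0 : ℝ) *
            ((∏ m ∈ range 0, (b + m)) * (∏ m ∈ Ico 0 (n+1), (c + m)))
        = ∑ d ∈ range (n+1), (-1:ℝ)^d * (n.choose d : ℝ) *
            ((∏ m ∈ range d, (b + m)) * (∏ m ∈ Ico d (n+1), (c + m))) := by
      have := Finset.sum_range_succ' (fun d => (-1:ℝ)^d * (n.choose d : ℝ) *
            ((∏ m ∈ range d, (b + m)) * (∏ m ∈ Ico d (n+1), (c + m)))) (n+1)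
      rw [Finset.sum_range_succ] at this
      simp only [Nat.choose_succ_self] at this
      simp only [Nat.cast_zero, zero_mul, mul_zero, add_zero, Nat.choose_zero_right,
        Nat.cast_one, pow_zero, one_mul, prod_range_zero] at this ⊢
      linarith [this]
    rw [add_right_comm, h1, ← Finset.sum_add_distrib]
    have h2 : ∀ d ∈ range (n+1),
        ((-1:ℝ)^d * (n.choose d : ℝ) *
            ((∏ m ∈ range d, (b + m)) * (∏ m ∈ Ico d (n+1), (c + m))))
        + ((-1:ℝ)^(d+1) * (n.choose d : ℝ) *
            ((∏ m ∈ range (d+1), (b + m)) * (∏ m ∈ Ico (d+1) (n+1), (c + m))))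
        = (c - b) * ((-1:ℝ)^d * (n.choose d : ℝ) *
            ((∏ m ∈ range d, (b + m)) * (∏ m ∈ Ico d n, ((c+1) + m)))) := by
      intro d hd
      have hdn : d < n + 1 := mem_range.mp hd
      rw [Finset.prod_eq_prod_Ico_succ_bot hdn (fun m => c + (m:ℝ)), prod_range_succ]
      have hre : (∏ m ∈ Ico (d+1) (n+1), (c + (m:ℝ))) = ∏ m ∈ Ico d n, ((c+1) + (m:ℝ)) := by
        rw [Finset.prod_Ico_eq_prod_range, Finset.prod_Ico_eq_prod_range]
        have : n + 1 - (d + 1) = n - d := by omega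
        rw [this]
        refine Finset.prod_congr rfl fun m _ => ?_
        push_cast
        ring
      rw [hre]
      ring
    rw [Finset.sum_congr rfl h2, ← Finset.mul_sum, vandermonde b n (c+1)]
    have hfin : ∏ m ∈ range (n+1), (c - b + (m:ℝ)) = (c - b) * ∏ m ∈ range n, (c + 1 - b + (m:ℝ)) := by
      rw [Finset.prod_range_succ']
      rw [Finset.prod_congr rfl (fun m _ => (by push_cast; ring : c - b + ((m+1 : ℕ):ℝ) = c + 1 - b + (m:ℝ)))]
      simp
      ring
    rw [hfin]

private noncomputable def av (γ : ℝ) (i : ℕ) : ℕ → ℝ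
  | 0 => 1
  | d + 1 => ((i:ℝ) - d) * ((i:ℝ) - d - γ) * av γ i d / (((d:ℝ) + 1) * ((d:ℝ) + 1 + γ))

private noncomputable def bv (γ : ℝ) (R : ℕ → ℝ) (i : ℕ) : ℕ → ℝ
  | 0 => 0
  | d + 1 => (((i:ℝ) - d) * ((i:ℝ) - d - γ) * bv γ R i d - R (i - (d+1))) /
      (((d:ℝ) + 1) * ((d:ℝ) + 1 + γ))

private lemma av_closed (γ : ℝ) (hγ : 0 ≤ γ) (i : ℕ) :
    ∀ d : ℕ, d ≤ i → av γ i d =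
      (i.choose d : ℝ) * (∏ m ∈ range d, ((i:ℝ) - γ - m)) / (∏ m ∈ range d, (γ + 1 + m)) := by
  intro d
  induction d with
  | zero => intro _; simp [av]
  | succ d ih =>
    intro hd
    have hdi : d ≤ i := by omega
    have hv : (0:ℝ) < ∏ m ∈ range d, (γ + 1 + m) := by
      apply Finset.prod_pos; intro m _; positivity
    have hchoose : (i.choose (d+1) : ℝ) * ((d:ℝ)+1) = (i.choose d : ℝ) * ((i:ℝ) - d) := by
      have := Nat.choose_succ_right_eq i d
      have hcast : ((i - d : ℕ) : ℝ) = (i:ℝ) - d := by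
        rw [Nat.cast_sub hdi]
      calc (i.choose (d+1) : ℝ) * ((d:ℝ)+1) = ((i.choose (d+1) * (d+1) : ℕ) : ℝ) := by push_cast; ring
        _ = ((i.choose d * (i - d) : ℕ) : ℝ) := by rw [this]
        _ = (i.choose d : ℝ) * ((i:ℝ) - d) := by push_cast [hcast]; ring
    rw [av, ih hdi, prod_range_succ, prod_range_succ]
    have h1 : ((d:ℝ) + 1) ≠ 0 := by positivity
    have h2 : ((d:ℝ) + 1 + γ) ≠ 0 := by positivity
    field_simp
    linear_combination (-(∏ m ∈ range d, ((i:ℝ) - γ - (m:ℝ)))) * (γ + 1 + (d:ℝ)) * ((i:ℝ) - γ - (d:ℝ)) * hchoose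

private lemma av_sum_pos (γ : ℝ) (hγ : 0 ≤ γ) (i : ℕ) :
    0 < ∑ d ∈ range (i+1), av γ i d := by
  have hV : (0:ℝ) < ∏ m ∈ range i, (γ + 1 + m) := by
    apply Finset.prod_pos; intro m _; positivity
  have key : ∀ d ∈ range (i+1),
      av γ i d = ((-1:ℝ)^d * (i.choose d : ℝ) *
        ((∏ m ∈ range d, ((γ - i) + m)) * (∏ m ∈ Ico d i, ((γ + 1) + m)))) /
        (∏ m ∈ range i, (γ + 1 + m)) := by
    intro d hd
    have hdi : d ≤ i := by have := Finset.mem_range.mp hd; omega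
    rw [av_closed γ hγ i d hdi]
    have hu : (∏ m ∈ range d, ((i:ℝ) - γ - m)) = (-1:ℝ)^d * ∏ m ∈ range d, ((γ - i) + m) := by
      rw [show ((-1:ℝ)^d) = ∏ _m ∈ range d, (-1:ℝ) from by simp, ← Finset.prod_mul_distrib]
      refine Finset.prod_congr rfl fun m _ => by ring
    have hsplit : (∏ m ∈ range d, (γ + 1 + (m:ℝ))) * (∏ m ∈ Ico d i, (γ + 1 + (m:ℝ)))
        = ∏ m ∈ range i, (γ + 1 + (m:ℝ)) := Finset.prod_range_mul_prod_Ico _ hdi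
    have hvd : (0:ℝ) < ∏ m ∈ range d, (γ + 1 + (m:ℝ)) := by
      apply Finset.prod_pos; intro m _; positivity
    rw [div_eq_div_iff (ne_of_gt hvd) (ne_of_gt hV)]
    rw [hu, ← hsplit]
    ring_nf
  rw [Finset.sum_congr rfl key, ← Finset.sum_div]
  have hvdm := vandermonde (γ - (i:ℝ)) i (γ + 1)
  rw [hvdm]
  apply div_pos _ hV
  apply Finset.prod_pos
  intro m _
  have : γ + 1 - (γ - (i:ℝ)) + m = (i:ℝ) + 1 + m := by ring
  rw [this]
  positivity

private noncomputable def ker (γ : ℝ) (lam : ℕ → ℝ) : ℕ → ℕ → ℝ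
  | i => fun j =>
    if i < j then 0
    else
      av γ i (i - j) *
        ((-lam i / (2*(2*(i:ℝ)+1)) -
          ∑ j' ∈ Finset.range (i+1),
            bv γ (fun j'' => ∑ k ∈ Finset.Icc j'' (i-1),
              (if _h : k < i then ker γ lam k j'' else 0) * lam (i-1-k)) i (i - j')) /
         (∑ d ∈ Finset.range (i+1), av γ i d)) +
      bv γ (fun j'' => ∑ k ∈ Finset.Icc j'' (i-1),
        (if _h : k < i then ker γ lam k j'' else 0) * lam (i-1-k)) i (i - j)
  termination_by i => i

private noncomputable def Rfun (γ : ℝ) (lam : ℕ → ℝ) (i : ℕ) (j : ℕ) : ℝ :=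
  ∑ k ∈ Finset.Icc j (i-1), (if _h : k < i then ker γ lam k j else 0) * lam (i-1-k)

private noncomputable def tval (γ : ℝ) (lam : ℕ → ℝ) (i : ℕ) : ℝ :=
  (-lam i / (2*(2*(i:ℝ)+1)) -
    ∑ j' ∈ Finset.range (i+1), bv γ (Rfun γ lam i) i (i - j')) /
  (∑ d ∈ Finset.range (i+1), av γ i d)

private lemma ker_eq (γ : ℝ) (lam : ℕ → ℝ) (i j : ℕ) :
    ker γ lam i j = if i < j then 0
      else av γ i (i - j) * tval γ lam i + bv γ (Rfun γ lam i) i (i - j) := by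
  rw [ker]
  rfl

private lemma Rfun_eq (γ : ℝ) (lam : ℕ → ℝ) {i : ℕ} (hi : 1 ≤ i) (j : ℕ) :
    Rfun γ lam i j = ∑ k ∈ Finset.Icc j (i-1), ker γ lam k j * lam (i-1-k) := by
  unfold Rfun
  refine Finset.sum_congr rfl fun k hk => ?_
  have : k < i := by have := (Finset.mem_Icc.mp hk).2; omega
  rw [dif_pos this]

-- the key per-step algebra
private lemma step_eq (γ : ℝ) (hγ : 0 ≤ γ) (R : ℕ → ℝ) (i d : ℕ) (t : ℝ) :
    (((d:ℝ)+1) * ((d:ℝ)+1+γ)) * (av γ i (d+1) * t + bv γ R i (d+1))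
      = ((i:ℝ)-d) * ((i:ℝ)-d-γ) * (av γ i d * t + bv γ R i d) - R (i - (d+1)) := by
  have h1 : ((d:ℝ) + 1) * ((d:ℝ)+1+γ) ≠ 0 := by positivity
  rw [av, bv]
  field_simp
  ring

private lemma ker_sum (γ : ℝ) (hγ : 0 ≤ γ) (lam : ℕ → ℝ) (i : ℕ) :
    ∑ j ∈ Finset.range (i+1), ker γ lam i j = -lam i / (2*(2*(i:ℝ)+1)) := by
  have hS := av_sum_pos γ hγ i
  have h1 : ∀ j ∈ Finset.range (i+1),
      ker γ lam i j = av γ i (i - j) * tval γ lam i + bv γ (Rfun γ lam i) i (i - j) := by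
    intro j hj
    rw [ker_eq, if_neg (by have := Finset.mem_range.mp hj; omega)]
  rw [Finset.sum_congr rfl h1, Finset.sum_add_distrib, ← Finset.sum_mul]
  have h2 : ∑ j ∈ Finset.range (i+1), av γ i (i - j) = ∑ d ∈ Finset.range (i+1), av γ i d := by
    have := Finset.sum_range_reflect (fun d => av γ i d) (i+1)
    simpa using this
  rw [h2]
  unfold tval
  field_simp
  ring

private lemma ker_rec (γ : ℝ) (hγ : 0 ≤ γ) (lam : ℕ → ℝ) (i : ℕ) (hi : 1 ≤ i)
    (j : ℕ) (hj : j ≤ i - 1) :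
    ((j:ℝ)+1) * ((j:ℝ)+1-γ) * ker γ lam i (j+1) -
        ((i:ℝ)-(j:ℝ)) * ((i:ℝ)-(j:ℝ)+γ) * ker γ lam i j =
      ∑ k ∈ Finset.Icc j (i-1), ker γ lam k j * lam (i-1-k) := by
  set d := i - 1 - j with hdef
  have hdd : j + (d + 1) = i := by omega
  have hj' : (j:ℝ) = (i:ℝ) - (d:ℝ) - 1 := by
    have := congrArg (Nat.cast : ℕ → ℝ) hdd
    push_cast at this
    linarith
  rw [ker_eq γ lam i (j+1), ker_eq γ lam i j, if_neg (by omega), if_neg (by omega)]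
  rw [show i - (j+1) = d from by omega, show i - j = d + 1 from by omega]
  have hstep := step_eq γ hγ (Rfun γ lam i) i d (tval γ lam i)
  rw [show i - (d+1) = j from by omega] at hstep
  rw [← Rfun_eq γ lam hi j, hj']
  linarith [hstep]

private lemma row_solve (γ : ℝ) (hγ : 0 ≤ γ) (i : ℕ) (R : ℕ → ℝ) (x : ℕ → ℝ)
    (hrec : ∀ d : ℕ, d + 1 ≤ i →
      ((i:ℝ)-d) * ((i:ℝ)-d-γ) * x (i-d) - (((d:ℝ)+1)*((d:ℝ)+1+γ)) * x (i-(d+1))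
        = R (i-(d+1))) :
    ∀ d : ℕ, d ≤ i → x (i - d) = av γ i d * x i + bv γ R i d := by
  intro d
  induction d with
  | zero => intro _; simp [av, bv]
  | succ d ih =>
    intro hd
    have hdi : d ≤ i := by omega
    have h1 : (((d:ℝ)+1)*((d:ℝ)+1+γ)) ≠ 0 := by positivity
    have hr := hrec d hd
    rw [ih hdi] at hr
    have hstep := step_eq γ hγ R i d (x i)
    have hkey : (((d:ℝ)+1)*((d:ℝ)+1+γ)) * x (i-(d+1))
        = (((d:ℝ)+1)*((d:ℝ)+1+γ)) * (av γ i (d+1) * x i + bv γ R i (d+1)) := by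
      rw [hstep]; linarith
    exact mul_left_cancel₀ h1 hkey

theorem kernel_series_coefficients_exist_unique (γ : ℝ) (hγ : 0 ≤ γ) (lam : ℕ → ℝ) :
    ∃! C : ℕ → ℕ → ℝ,
      (∀ i j, i < j → C i j = 0) ∧
      (∀ i : ℕ, ∑ j ∈ Finset.range (i + 1), C i j = -lam i / (2 * (2 * (i : ℝ) + 1))) ∧
      (∀ i : ℕ, 1 ≤ i → ∀ j : ℕ, j ≤ i - 1 →
        ((j : ℝ) + 1) * ((j : ℝ) + 1 - γ) * C i (j + 1) -
            ((i : ℝ) - (j : ℝ)) * ((i : ℝ) - (j : ℝ) + γ) * C i j =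
          ∑ k ∈ Finset.Icc j (i - 1), C k j * lam (i - 1 - k)) := by
  refine ⟨ker γ lam, ⟨fun i j hij => by rw [ker_eq, if_pos hij],
    ker_sum γ hγ lam, ker_rec γ hγ lam⟩, ?_⟩
  rintro D ⟨hD0, hD1, hD2⟩
  have main : ∀ i, ∀ j, D i j = ker γ lam i j := by
    intro i
    induction i using Nat.strong_induction_on with
    | _ i IH =>
      by_cases hi0 : i = 0
      · subst hi0
        intro j
        match j with
        | 0 =>
          have h1 := hD1 0
          have h2 := ker_sum γ hγ lam 0
          simp only [show (0:ℕ)+1 = 1 from rfl, Finset.sum_range_one] at h1 h2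
          rw [h1, h2]
        | j + 1 => rw [hD0 0 (j+1) (by omega), ker_eq, if_pos (by omega)]
      · have hi : 1 ≤ i := by omega
        have hS := av_sum_pos γ hγ i
        have hRD : ∀ j', Rfun γ lam i j'
            = ∑ k ∈ Finset.Icc j' (i-1), D k j' * lam (i-1-k) := by
          intro j'
          rw [Rfun_eq γ lam hi]
          refine (Finset.sum_congr rfl fun k hk => ?_)
          have hk' : k < i := by have := (Finset.mem_Icc.mp hk).2; omega
          rw [IH k hk']
        have hrowD : ∀ d, d ≤ i →
            D i (i - d) = av γ i d * D i i + bv γ (Rfun γ lam i) i d := by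
          apply row_solve γ hγ i (Rfun γ lam i) (D i)
          intro d hd
          have hj := hD2 i hi (i-(d+1)) (by omega)
          rw [show i - (d+1) + 1 = i - d from by omega] at hj
          rw [← hRD (i - (d+1))] at hj
          have hc : ((i - (d+1) : ℕ) : ℝ) = (i:ℝ) - (d:ℝ) - 1 := by
            have h' : ((i - (d+1) : ℕ) : ℝ) = (i:ℝ) - ((d:ℝ)+1) := by
              rw [Nat.cast_sub hd]; push_cast; ring
            linarith [h']
          rw [hc] at hj
          linarith [hj]
        have hsum := hD1 i
        have hsum2 : ∀ j ∈ Finset.range (i+1),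
            D i j = av γ i (i-j) * D i i + bv γ (Rfun γ lam i) i (i-j) := by
          intro j hj
          have hji : j ≤ i := by have := Finset.mem_range.mp hj; omega
          have h := hrowD (i-j) (by omega)
          rw [show i - (i-j) = j from by omega] at h
          exact h
        rw [Finset.sum_congr rfl hsum2, Finset.sum_add_distrib, ← Finset.sum_mul] at hsum
        have h2 : ∑ j ∈ Finset.range (i+1), av γ i (i - j)
            = ∑ d ∈ Finset.range (i+1), av γ i d := by
          have := Finset.sum_range_reflect (fun d => av γ i d) (i+1)
          simpa using this
        rw [h2] at hsum
        have hDii : D i i = tval γ lam i := by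
          unfold tval
          rw [eq_div_iff (ne_of_gt hS)]
          linarith [hsum]
        intro j
        by_cases hij : i < j
        · rw [hD0 i j hij, ker_eq, if_pos hij]
        · rw [ker_eq, if_neg hij]
          have h := hrowD (i-j) (by omega)
          rw [show i - (i-j) = j from by omega, hDii] at h
          exact h
  funext x y
  exact main x y
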